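/- (Theorem 1, weighted off-diagonal.) Let ψ : Σ × Σ → ℝ be any weight function on ordered pairs. Define the n×n real matrix L by: for i > j, L_{ij} = ψ(r_{x_j}, r_{x_i}) if both items r_{x_i} and r_{x_j} occur in every ranking of R and r_{x_j} occurs before r_{x_i} in every ranking of R, and L_{ij} = 0 in all other cases (in particular L_{ij} = 0 for i ≤ j). Let z = (1,…,1)^T ∈ ℝ^n. Then for every integer p ≥ 2, z^T L^{p−1} z = Σ_{y ∈ S_p(R)} Π_{i=1}^{p−1} ψ(y_i, y_{i+1}), where the sum ranges over all common subsequences y = (y_1, …, y_p) of R of length p. -/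

import Mathlib

open List Matrix

/-- The set of nonempty common subsequences of a family of rankings,
where a ranking is a list and "subsequence" is `List.Sublist`. -/
def commonSubseq {α : Type*} (R : Set (List α)) : Set (List α) :=
  {y | y ≠ [] ∧ ∀ r ∈ R, y.Sublist r}

/-- `κ(R)`: the number of nonempty common subsequences of the family `R`. -/
noncomputable def kappa {α : Type*} (R : Set (List α)) : ℕ :=
  (commonSubseq R).ncard

/-- `κ_p(R)`: the number of nonempty common subsequences of `R` of length `p`. -/
noncomputable def kappaP {α : Type*} (p : ℕ) (R : Set (List α)) : ℕ :=
  {y ∈ commonSubseq R | y.length = p}.ncard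

namespace QFW

noncomputable def wP {β : Type*} (f : β → β → ℝ) (y : List β) : ℝ :=
  ((y.zip y.tail).map fun q => f q.1 q.2).prod

@[simp] lemma wP_singleton {β : Type*} (f : β → β → ℝ) (a : β) : wP f [a] = 1 := rfl

@[simp] lemma wP_cons_cons {β : Type*} (f : β → β → ℝ) (a b : β) (l : List β) :
    wP f (a :: b :: l) = f a b * wP f (b :: l) := by
  simp [wP]

lemma wP_eq_zero {β : Type*} {f : β → β → ℝ} {Rel : β → β → Prop}
    (hz : ∀ a b, ¬ Rel a b → f a b = 0) :
    ∀ {l : List β}, ¬ l.Chain' Rel → wP f l = 0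
  | [], h => absurd List.isChain_nil h
  | [a], h => absurd (List.isChain_singleton a) h
  | a :: b :: l, h => by
      rw [List.Chain', List.isChain_cons_cons] at h
      by_cases hab : Rel a b
      · have : ¬ (b :: l).Chain' Rel := fun hc => h ⟨hab, hc⟩
        rw [wP_cons_cons, wP_eq_zero hz this, mul_zero]
      · rw [wP_cons_cons, hz a b hab, zero_mul]

lemma wP_map_of_chain {β γ : Type*} {m : β → γ} {f : γ → γ → ℝ} {g : β → β → ℝ}
    {Rel : β → β → Prop} (hfg : ∀ a b, Rel a b → g a b = f (m a) (m b)) :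
    ∀ {l : List β}, l.Chain' Rel → wP g l = wP f (l.map m)
  | [], _ => rfl
  | [a], _ => rfl
  | a :: b :: l, h => by
      rw [List.Chain', List.isChain_cons_cons] at h
      simp only [List.map_cons, wP_cons_cons]
      rw [hfg a b h.1, wP_map_of_chain hfg h.2, List.map_cons]

lemma pow_mulVec_eq {n : ℕ} (N : Matrix (Fin n) (Fin n) ℝ) :
    ∀ (k : ℕ) (i : Fin n),
      (N ^ k *ᵥ fun _ => (1 : ℝ)) i = ∑ g : Fin k → Fin n, wP (fun a b => N a b) (i :: List.ofFn g)
  | 0, i => by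
      simp [Matrix.one_mulVec, List.ofFn_zero]
  | (k+1), i => by
      rw [pow_succ', ← Matrix.mulVec_mulVec]
      have hv : ∀ j, (N ^ k *ᵥ fun _ => (1:ℝ)) j
          = ∑ g : Fin k → Fin n, wP (fun a b => N a b) (j :: List.ofFn g) := pow_mulVec_eq N k
      show ∑ j, N i j * (N ^ k *ᵥ fun _ => (1:ℝ)) j = _
      rw [← Equiv.sum_comp (Fin.consEquiv (fun _ => Fin n))
        (fun g => wP (fun a b => N a b) (i :: List.ofFn g))]
      rw [Fintype.sum_prod_type]
      simp only [hv, Finset.mul_sum, Fin.consEquiv_apply, List.ofFn_succ, Fin.cons_zero,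
        Fin.cons_succ, wP_cons_cons]

end QFW
namespace QFW
lemma dot_transpose {n : ℕ} (A : Matrix (Fin n) (Fin n) ℝ) :
    dotProduct (fun _ => (1:ℝ)) (A *ᵥ fun _ => 1) =
      dotProduct (fun _ => (1:ℝ)) (Aᵀ *ᵥ fun _ => 1) := by
  simp only [dotProduct, Matrix.mulVec, Matrix.transpose_apply, one_mul, mul_one]
  exact Finset.sum_comm

lemma dot_pow {n : ℕ} (N : Matrix (Fin n) (Fin n) ℝ) (k : ℕ) :
    dotProduct (fun _ => (1:ℝ)) (N ^ k *ᵥ fun _ => 1) =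
      ∑ g : Fin (k+1) → Fin n, wP (fun a b => N a b) (List.ofFn g) := by
  show ∑ i, 1 * (N ^ k *ᵥ fun _ => (1:ℝ)) i = _
  rw [← Equiv.sum_comp (Fin.consEquiv (fun _ => Fin n))
    (fun g => wP (fun a b => N a b) (List.ofFn g))]
  rw [Fintype.sum_prod_type]
  simp only [one_mul, pow_mulVec_eq, Fin.consEquiv_apply, List.ofFn_succ, Fin.cons_zero,
    Fin.cons_succ]

lemma pairwise_indexOf {α : Type*} [DecidableEq α] {r : List α} (hr : r.Nodup) :
    r.Pairwise (fun u v => r.idxOf u < r.idxOf v) := by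
  rw [List.pairwise_iff_get]
  intro i j hij
  rw [List.get_eq_getElem, List.get_eq_getElem, List.Nodup.idxOf_getElem hr, List.Nodup.idxOf_getElem hr]
  exact hij

lemma sublist_of_chain' {α : Type*} [DecidableEq α] {r y : List α} (hy : 2 ≤ y.length)
    (hc : y.Chain' (fun u v => u ∈ r ∧ v ∈ r ∧ r.idxOf u < r.idxOf v)) : y <+ r := by
  haveI : IsTrans α (fun u v => u ∈ r ∧ v ∈ r ∧ r.idxOf u < r.idxOf v) :=
    ⟨fun a b c hab hbc => ⟨hab.1, hbc.2.1, lt_trans hab.2.2 hbc.2.2⟩⟩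
  have hpw := List.isChain_iff_pairwise.mp hc
  rw [List.pairwise_iff_get] at hpw
  have hmem : ∀ ix : Fin y.length, y.get ix ∈ r := by
    rintro ⟨t, ht⟩
    by_cases h1 : t + 1 < y.length
    · exact (hpw ⟨t, ht⟩ ⟨t+1, h1⟩ (by simp [Fin.mk_lt_mk])).1
    · have h0 : 0 < t := by omega
      exact (hpw ⟨0, by omega⟩ ⟨t, ht⟩ (by simp [Fin.mk_lt_mk, h0])).2.1
  have hlt : ∀ ix : Fin y.length, r.idxOf (y.get ix) < r.length :=
    fun ix => List.idxOf_lt_length_iff.2 (hmem ix)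
  refine List.sublist_iff_exists_fin_orderEmbedding_get_eq.mpr
    ⟨OrderEmbedding.ofStrictMono (fun ix => ⟨r.idxOf (y.get ix), hlt ix⟩) ?_, ?_⟩
  · intro i j hij
    exact Fin.mk_lt_mk.2 (hpw i j hij).2.2
  · intro ix
    exact (List.idxOf_get (hlt ix)).symm
end QFW

/-- Theorem 1, weighted off-diagonal: with edge weights
`ψ : Σ × Σ → ℝ`, `zᵀ L^(p-1) z` equals the sum over all common subsequences
`y = (y₁, …, y_p)` of `R` of length `p` of the product `∏ ψ(y_i, y_{i+1})`. -/
theorem quadratic_form_weighted {α : Type*} [DecidableEq α]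
    (R : Finset (List α)) (hR : R.Nonempty) (hnd : ∀ r ∈ R, r.Nodup)
    (rx : List α) (hrx : rx ∈ R) (ψ : α → α → ℝ)
    (L : Matrix (Fin rx.length) (Fin rx.length) ℝ)
    (hlow : ∀ i j : Fin rx.length, j < i →
      L i j = if (∀ r ∈ R, rx.get i ∈ r) ∧ (∀ r ∈ R, rx.get j ∈ r) ∧
          (∀ r ∈ R, r.idxOf (rx.get j) < r.idxOf (rx.get i))
        then ψ (rx.get j) (rx.get i) else 0)
    (hrest : ∀ i j : Fin rx.length, ¬ j < i → L i j = 0)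
    (p : ℕ) (hp : 2 ≤ p) :
    dotProduct (fun _ => (1 : ℝ)) ((L ^ (p - 1)).mulVec fun _ => 1) =
      ∑ᶠ y ∈ {y | y ∈ commonSubseq (R : Set (List α)) ∧ y.length = p},
        (((y.zip y.tail).map fun q => ψ q.1 q.2).prod) := by
  classical
  obtain ⟨k, rfl⟩ : ∃ k, p = k + 2 := ⟨p - 2, by omega⟩
  set N := Lᵀ with hNdef
  have hNL : ∀ a b, N a b = L b a := fun a b => rfl
  set rel : Fin rx.length → Fin rx.length → Prop := fun a b =>
    a < b ∧ ((∀ r ∈ R, rx.get b ∈ r) ∧ (∀ r ∈ R, rx.get a ∈ r) ∧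
      (∀ r ∈ R, r.idxOf (rx.get a) < r.idxOf (rx.get b))) with hreldef
  have hNz : ∀ a b, ¬ rel a b → N a b = 0 := by
    intro a b h
    by_cases hab : a < b
    · rw [hNL, hlow b a hab, if_neg]
      intro hc; exact h ⟨hab, hc⟩
    · exact hrest b a hab
  have hNψ : ∀ a b, rel a b → N a b = ψ (rx.get a) (rx.get b) := by
    intro a b h
    rw [hNL, hlow b a h.1, if_pos h.2]
  -- LHS
  have h1 : dotProduct (fun _ => (1:ℝ)) ((L ^ (k + 2 - 1)).mulVec fun _ => 1)
      = ∑ g : Fin (k+2) → Fin rx.length, QFW.wP (fun a b => N a b) (List.ofFn g) := by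
    have hk1 : k + 2 - 1 = k + 1 := rfl
    rw [hk1, QFW.dot_transpose, Matrix.transpose_pow]
    exact QFW.dot_pow N (k+1)
  rw [h1]
  set G : Finset (Fin (k+2) → Fin rx.length) :=
    Finset.univ.filter (fun g => (List.ofFn g).Chain' rel) with hG
  have h2 : ∑ g : Fin (k+2) → Fin rx.length, QFW.wP (fun a b => N a b) (List.ofFn g)
      = ∑ g ∈ G, QFW.wP (fun a b => N a b) (List.ofFn g) := by
    symm
    apply Finset.sum_subset (Finset.filter_subset _ _)
    intro g _ hg
    have hng : ¬ (List.ofFn g).Chain' rel := by simpa [hG] using hg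
    exact QFW.wP_eq_zero hNz hng
  set e : (Fin (k+2) → Fin rx.length) → List α := fun g => (List.ofFn g).map rx.get with he
  have h3 : ∀ g ∈ G, QFW.wP (fun a b => N a b) (List.ofFn g) = QFW.wP ψ (e g) := by
    intro g hg
    have hcg : (List.ofFn g).Chain' rel := by simpa [hG] using hg
    exact QFW.wP_map_of_chain hNψ hcg
  have hinj : Function.Injective e := by
    intro g g' hgg'
    exact List.ofFn_injective (List.map_injective_iff.mpr
      (List.nodup_iff_injective_get.mp (hnd rx hrx)) hgg')
  -- the set of common subsequences of length k+2 is the image of G under e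
  have hset : {y | y ∈ commonSubseq (R : Set (List α)) ∧ y.length = k+2} = ↑(G.image e) := by
    ext y
    simp only [Finset.coe_image, Set.mem_image, Finset.mem_coe, Set.mem_setOf_eq]
    constructor
    · rintro ⟨⟨hyne, hysub⟩, hylen⟩
      obtain ⟨f, hf⟩ := List.sublist_iff_exists_fin_orderEmbedding_get_eq.mp (hysub rx hrx)
      refine ⟨fun t => f (Fin.cast hylen.symm t), ?_, ?_⟩
      · -- membership in G
        simp only [hG, Finset.mem_filter, Finset.mem_univ, true_and]
        rw [List.Chain', List.isChain_iff_getElem]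
        intro t ht
        have ht' : t < k + 1 := by simpa using ht
        simp only [List.getElem_ofFn]
        have hyget : ∀ ix : Fin y.length, rx.get (f ix) = y.get ix := fun ix => (hf ix).symm
        constructor
        · apply f.strictMono
          simp [Fin.lt_def]
        · refine ⟨?_, ?_, ?_⟩ <;> intro r hr
          · rw [hyget]
            exact (hysub r hr).subset (List.get_mem _ _)
          · rw [hyget]
            exact (hysub r hr).subset (List.get_mem _ _)
          · rw [hyget, hyget]
            have hpw := List.Pairwise.sublist (hysub r hr) (QFW.pairwise_indexOf (hnd r hr))
            rw [List.pairwise_iff_get] at hpw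
            apply hpw
            simp [Fin.lt_def]
      · -- e g = y
        apply List.ext_get
        · simp [he, hylen]
        · intro t h1t h2t
          simp only [he, List.get_eq_getElem, List.getElem_map, List.getElem_ofFn]
          exact (hf _).symm
    · rintro ⟨g, hgG, rfl⟩
      have hcg : (List.ofFn g).Chain' rel := by
        simpa [hG] using hgG
      have hlen : (e g).length = k + 2 := by simp [he]
      refine ⟨⟨?_, ?_⟩, hlen⟩
      · intro hnil
        rw [hnil] at hlen
        simp at hlen
      · intro r hr
        apply QFW.sublist_of_chain' (by omega)
        rw [he]
        rw [List.Chain', List.isChain_map]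
        refine List.IsChain.imp ?_ hcg
        intro a b hab
        exact ⟨hab.2.2.1 r hr, hab.2.1 r hr, hab.2.2.2 r hr⟩
  rw [hset, finsum_mem_coe_finset, Finset.sum_image (fun x _ y _ h => hinj h), h2]
  exact Finset.sum_congr rfl h3
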